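/- Let p be a prime, n ≥ 1, and A a row-stochastic n×n matrix over F_p = ZMod p. For α ∈ F_p and t ∈ ℕ let S_α^t = {x ∈ F_p^n : A^t x = α • 𝟙} (equivalently, the t-fold preimage of {α·𝟙} under x ↦ A x, since α·𝟙 is a fixed point of A). Then the following are equivalent: (i) the iteration x(t+1) = A x(t) achieves consensus; (ii) there exists α ∈ F_p and T < n such that S_α^T = S_α^{T+1} and the cardinality of S_α^T equals p^{n−1}; (iii) for every α ∈ F_p there exists T < n such that S_α^T = S_α^{T+1} and the cardinality of S_α^T equals p^{n−1}. -/

import Mathlib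

open Matrix

/-- Recursion-subspaces characterization of finite-field consensus.
`S_α^t = {x | A^t *ᵥ x = α • 𝟙}` is the `t`-fold preimage of `{α • 𝟙}`.
The iteration achieves consensus iff for some (equivalently, for every)
`α ∈ ZMod p` the inverse recursion converges with limiting set of
cardinality `p ^ (n-1)`. -/
theorem finiteField_consensus_iff_recursion_sets
    (p n : ℕ) [Fact p.Prime] (hn : 1 ≤ n)
    (A : Matrix (Fin n) (Fin n) (ZMod p))
    (hA : A *ᵥ (1 : Fin n → ZMod p) = 1) :
    ((∀ x0 : Fin n → ZMod p, ∃ T : ℕ, ∃ α : ZMod p,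
        ∀ t ≥ T, (A ^ t) *ᵥ x0 = α • (1 : Fin n → ZMod p)) ↔
      (∃ α : ZMod p, ∃ T : ℕ, T < n ∧
        {x : Fin n → ZMod p | (A ^ T) *ᵥ x = α • (1 : Fin n → ZMod p)} =
          {x : Fin n → ZMod p | (A ^ (T + 1)) *ᵥ x = α • (1 : Fin n → ZMod p)} ∧
        ({x : Fin n → ZMod p | (A ^ T) *ᵥ x = α • (1 : Fin n → ZMod p)}).ncard
          = p ^ (n - 1)))
    ∧
    ((∃ α : ZMod p, ∃ T : ℕ, T < n ∧
        {x : Fin n → ZMod p | (A ^ T) *ᵥ x = α • (1 : Fin n → ZMod p)} =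
          {x : Fin n → ZMod p | (A ^ (T + 1)) *ᵥ x = α • (1 : Fin n → ZMod p)} ∧
        ({x : Fin n → ZMod p | (A ^ T) *ᵥ x = α • (1 : Fin n → ZMod p)}).ncard
          = p ^ (n - 1)) ↔
      (∀ α : ZMod p, ∃ T : ℕ, T < n ∧
        {x : Fin n → ZMod p | (A ^ T) *ᵥ x = α • (1 : Fin n → ZMod p)} =
          {x : Fin n → ZMod p | (A ^ (T + 1)) *ᵥ x = α • (1 : Fin n → ZMod p)} ∧
        ({x : Fin n → ZMod p | (A ^ T) *ᵥ x = α • (1 : Fin n → ZMod p)}).ncard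
          = p ^ (n - 1))) := by
  classical
  have hp : p.Prime := Fact.out
  set L : Module.End (ZMod p) (Fin n → ZMod p) := Matrix.mulVecLin A with hL
  -- matrix powers vs endomorphism powers
  have hpow : ∀ (t : ℕ) (x : Fin n → ZMod p), (A ^ t) *ᵥ x = (L ^ t) x := by
    intro t
    induction t with
    | zero => intro x; simp
    | succ t ih =>
      intro x
      rw [pow_succ, pow_succ, ← Matrix.mulVec_mulVec, Module.End.mul_apply]
      rw [show (L : (Fin n → ZMod p) →ₗ[ZMod p] (Fin n → ZMod p)) x = A *ᵥ x from rfl] at *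
      rw [ih]
  have hone : ∀ t : ℕ, (L ^ t) (1 : Fin n → ZMod p) = 1 := by
    intro t
    induction t with
    | zero => simp
    | succ t ih =>
      rw [pow_succ', Module.End.mul_apply, ih]
      exact hA
  have h1ne : (1 : Fin n → ZMod p) ≠ 0 := by
    intro h
    have := congrFun h ⟨0, hn⟩
    simp at this
  set K : ℕ → Submodule (ZMod p) (Fin n → ZMod p) := fun t => LinearMap.ker (L ^ t) with hK
  have hker0 : ∀ t : ℕ,
      {x : Fin n → ZMod p | (A ^ t) *ᵥ x = (0 : ZMod p) • (1 : Fin n → ZMod p)}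
        = (K t : Set (Fin n → ZMod p)) := by
    intro t
    ext x
    simp only [Set.mem_setOf_eq, hpow t x, zero_smul, SetLike.mem_coe, LinearMap.mem_ker]
    exact Iff.rfl
  -- translation by α • 1
  have hS : ∀ (α : ZMod p) (t : ℕ),
      {x : Fin n → ZMod p | (A ^ t) *ᵥ x = α • (1 : Fin n → ZMod p)}
        = (fun x => x + α • (1 : Fin n → ZMod p)) ''
          {x : Fin n → ZMod p | (A ^ t) *ᵥ x = (0 : ZMod p) • (1 : Fin n → ZMod p)} := by
    intro α t
    ext x
    simp only [Set.mem_image, Set.mem_setOf_eq, zero_smul, hpow]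
    constructor
    · intro h
      refine ⟨x - α • 1, ?_, by abel⟩
      rw [_root_.map_sub, h, _root_.map_smul, hone, sub_self]
    · rintro ⟨y, hy, rfl⟩
      rw [_root_.map_add, hy, _root_.map_smul, hone, zero_add]
  have hcard : ∀ (α : ZMod p) (t : ℕ),
      ({x : Fin n → ZMod p | (A ^ t) *ᵥ x = α • (1 : Fin n → ZMod p)}).ncard
        = Nat.card (K t) := by
    intro α t
    rw [hS, Set.ncard_image_of_injective _ (add_left_injective _), hker0,
      ← Nat.card_coe_set_eq]
    rfl
  have hcard_rank : ∀ t : ℕ, Nat.card (K t) = p ^ (Module.finrank (ZMod p) (K t)) := by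
    intro t
    rw [Nat.card_eq_fintype_card, Module.card_eq_pow_finrank (K := ZMod p) (V := K t), ZMod.card]
  have hVrank : Module.finrank (ZMod p) (Fin n → ZMod p) = n := by
    simp [Module.finrank_pi]
  have hmono : ∀ t : ℕ, K t ≤ K (t + 1) := by
    intro t x hx
    have hx' : (L ^ t) x = 0 := hx
    show (L ^ (t + 1)) x = 0
    rw [pow_succ', Module.End.mul_apply, hx', _root_.map_zero]
  -- stabilization at n - 1
  have hstab : K (n - 1) = K n := by
    by_contra hne0
    have hne : ∀ k : ℕ, k ≤ n - 1 → K k ≠ K (k + 1) := by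
      intro k hk h
      apply hne0
      have e1 := Module.End.ker_pow_constant h (n - 1 - k)
      have e2 := Module.End.ker_pow_constant h (n - k)
      rw [show k + (n - 1 - k) = n - 1 by omega] at e1
      rw [show k + (n - k) = n by omega] at e2
      exact e1.symm.trans e2
    have hstrict : ∀ k : ℕ, k ≤ n - 1 → K k < K (k + 1) :=
      fun k hk => lt_of_le_of_ne (hmono k) (hne k hk)
    have hgrow : ∀ k : ℕ, k ≤ n → k ≤ Module.finrank (ZMod p) (K k) := by
      intro k
      induction k with
      | zero => intro _; exact Nat.zero_le _
      | succ k ih =>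
        intro hk
        have h1 : k ≤ Module.finrank (ZMod p) (K k) := ih (by omega)
        have h2 := Submodule.finrank_lt_finrank_of_lt (hstrict k (by omega))
        omega
    have hKn : K n ≠ ⊤ := by
      intro h
      have : (1 : Fin n → ZMod p) ∈ K n := h ▸ Submodule.mem_top
      have : (L ^ n) (1 : Fin n → ZMod p) = 0 := this
      rw [hone] at this
      exact h1ne this
    have hlt : Module.finrank (ZMod p) (K n)
        < Module.finrank (ZMod p) (Fin n → ZMod p) :=
      Submodule.finrank_lt hKn
    rw [hVrank] at hlt
    have := hgrow n le_rfl
    omega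
  have hstabT : ∀ t : ℕ, n - 1 ≤ t → K t = K (n - 1) := by
    intro t ht
    have h' : K (n - 1) = K ((n - 1) + 1) := by
      rw [show n - 1 + 1 = n by omega]; exact hstab
    have := Module.End.ker_pow_constant h' (t - (n - 1))
    rw [show n - 1 + (t - (n - 1)) = t by omega] at this
    exact this.symm
  -- rank condition as finrank
  have hrank_iff : ∀ t : ℕ, Nat.card (K t) = p ^ (n - 1)
      ↔ Module.finrank (ZMod p) (K t) = n - 1 := by
    intro t
    rw [hcard_rank t]
    constructor
    · intro h; exact Nat.pow_right_injective hp.two_le h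
    · intro h; rw [h]
  -- main forward direction: consensus → rank of stable kernel is n - 1
  have main1 : (∀ x0 : Fin n → ZMod p, ∃ T : ℕ, ∃ α : ZMod p,
      ∀ t ≥ T, (A ^ t) *ᵥ x0 = α • (1 : Fin n → ZMod p)) →
      Module.finrank (ZMod p) (K (n - 1)) = n - 1 := by
    intro hcons
    have hline : ∀ x : Fin n → ZMod p, ∃ α : ZMod p, (L ^ (n - 1)) x = α • 1 := by
      intro x
      obtain ⟨T, α, hT⟩ := hcons x
      refine ⟨α, ?_⟩
      have h1 := hT (max T (n - 1)) (le_max_left _ _)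
      rw [hpow] at h1
      have hx : x - α • 1 ∈ K (max T (n - 1)) := by
        show (L ^ (max T (n - 1))) (x - α • 1) = 0
        rw [_root_.map_sub, h1, _root_.map_smul, hone, sub_self]
      rw [hstabT _ (le_max_right _ _)] at hx
      have hx' : (L ^ (n - 1)) (x - α • 1) = 0 := hx
      rw [_root_.map_sub, _root_.map_smul, hone, sub_eq_zero] at hx'
      exact hx'
    set φ : (Fin n → ZMod p) →ₗ[ZMod p] ZMod p :=
      (LinearMap.proj (⟨0, hn⟩ : Fin n)).comp
        ((L ^ (n - 1) : Module.End (ZMod p) (Fin n → ZMod p)) :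
          (Fin n → ZMod p) →ₗ[ZMod p] (Fin n → ZMod p)) with hφdef
    have hφ : ∀ x, (L ^ (n - 1)) x = φ x • (1 : Fin n → ZMod p) := by
      intro x
      obtain ⟨α, hα⟩ := hline x
      have : φ x = α := by
        show ((L ^ (n - 1)) x) ⟨0, hn⟩ = α
        rw [hα]
        simp
      rw [this, hα]
    have hkerφ : LinearMap.ker φ = K (n - 1) := by
      ext x
      simp only [LinearMap.mem_ker]
      constructor
      · intro h
        show (L ^ (n - 1)) x = 0
        rw [hφ x, h, zero_smul]
      · intro h
        have h' : (L ^ (n - 1)) x = 0 := h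
        show ((L ^ (n - 1)) x) ⟨0, hn⟩ = 0
        rw [h']
        rfl
    have hsurj : Function.Surjective φ := by
      intro α
      refine ⟨α • 1, ?_⟩
      show ((L ^ (n - 1)) (α • 1)) ⟨0, hn⟩ = α
      rw [_root_.map_smul, hone]
      simp
    have hrn := LinearMap.finrank_range_add_finrank_ker φ
    rw [LinearMap.range_eq_top.mpr hsurj, finrank_top, Module.finrank_self, hVrank,
      hkerφ] at hrn
    omega
  -- main backward direction
  have main2 : ∀ T : ℕ, K T = K (T + 1) → Module.finrank (ZMod p) (K T) = n - 1 →
      (∀ x0 : Fin n → ZMod p, ∃ Tc : ℕ, ∃ α : ZMod p,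
        ∀ t ≥ Tc, (A ^ t) *ᵥ x0 = α • (1 : Fin n → ZMod p)) := by
    intro T hTeq hTrank
    set R : Submodule (ZMod p) (Fin n → ZMod p) :=
      LinearMap.range ((L ^ T : Module.End (ZMod p) (Fin n → ZMod p)) :
        (Fin n → ZMod p) →ₗ[ZMod p] (Fin n → ZMod p)) with hR
    have hrn := LinearMap.finrank_range_add_finrank_ker
      ((L ^ T : Module.End (ZMod p) (Fin n → ZMod p)) :
        (Fin n → ZMod p) →ₗ[ZMod p] (Fin n → ZMod p))
    rw [hVrank] at hrn
    have hRrank : Module.finrank (ZMod p) R = 1 := by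
      have : Module.finrank (ZMod p) (LinearMap.ker
        ((L ^ T : Module.End (ZMod p) (Fin n → ZMod p)) :
          (Fin n → ZMod p) →ₗ[ZMod p] (Fin n → ZMod p))) = n - 1 := hTrank
      rw [this] at hrn
      rw [hR]
      omega
    have hle : Submodule.span (ZMod p) {(1 : Fin n → ZMod p)} ≤ R := by
      rw [Submodule.span_le, Set.singleton_subset_iff]
      exact ⟨1, hone T⟩
    have hReq : Submodule.span (ZMod p) {(1 : Fin n → ZMod p)} = R := by
      apply Submodule.eq_of_le_of_finrank_le hle
      rw [hRrank, finrank_span_singleton h1ne]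
    intro x0
    have hmem : (L ^ T) x0 ∈ R := LinearMap.mem_range_self _ x0
    rw [← hReq, Submodule.mem_span_singleton] at hmem
    obtain ⟨a, ha⟩ := hmem
    refine ⟨T, a, ?_⟩
    intro t ht
    rw [hpow, show t = (t - T) + T by omega, pow_add, Module.End.mul_apply, ← ha,
      _root_.map_smul, hone]
  -- package the ∃-side condition for a given α, T
  have cond0 : ∀ T : ℕ,
      ({x : Fin n → ZMod p | (A ^ T) *ᵥ x = (0 : ZMod p) • (1 : Fin n → ZMod p)} =
        {x : Fin n → ZMod p | (A ^ (T + 1)) *ᵥ x = (0 : ZMod p) • (1 : Fin n → ZMod p)})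
      ↔ K T = K (T + 1) := by
    intro T
    rw [hker0, hker0]
    exact ⟨fun h => SetLike.coe_injective h, fun h => by rw [h]⟩
  have condα : ∀ (α : ZMod p) (T : ℕ),
      ({x : Fin n → ZMod p | (A ^ T) *ᵥ x = α • (1 : Fin n → ZMod p)} =
        {x : Fin n → ZMod p | (A ^ (T + 1)) *ᵥ x = α • (1 : Fin n → ZMod p)})
      ↔ K T = K (T + 1) := by
    intro α T
    rw [hS α T, hS α (T + 1), ← cond0 T]
    constructor
    · intro h
      exact Set.image_injective.mpr (add_left_injective _) h
    · intro h
      rw [h]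
    -- done
  constructor
  · constructor
    · intro hcons
      have hr := main1 hcons
      refine ⟨0, n - 1, by omega, ?_, ?_⟩
      · rw [condα 0 (n - 1)]
        exact (hstabT n (by omega)).symm.trans
          (by rw [show n - 1 + 1 = n by omega])
      · rw [hcard, hcard_rank, hr]
    · rintro ⟨α, T, hTn, hset, hcardT⟩
      rw [hcard] at hcardT
      exact main2 T ((condα α T).mp hset) ((hrank_iff T).mp hcardT)
  · constructor
    · rintro ⟨α, T, hTn, hset, hcardT⟩
      intro β
      refine ⟨T, hTn, ?_, ?_⟩
      · rw [condα β T]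
        exact (condα α T).mp hset
      · rw [hcard] at hcardT ⊢
        exact hcardT
    · intro h
      exact ⟨0, h 0⟩
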